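/- Lower-bound-preserving property of the convexification (Theorem 5.7): Assume uniform SOSC with constant γ > 0, let δ ∈ (0, γ), and suppose Υ̃ > 0 is such that ‖S̃_k(δ)‖ ≤ Υ̃ for all k = 0,…,N−1. Then H̃_k(δ) ⪰ λ_H I for all k = 0,…,N, where λ_H = (γ/(γ+Υ̃))² · δ > 0. -/

import Mathlib

open Matrix BigOperators Finset

/-- The spectral (operator) norm of a real matrix. -/
noncomputable def opNorm {m n : Type*} [Fintype m] [Fintype n] [DecidableEq n]
    (A : Matrix m n ℝ) : ℝ :=
  ‖LinearMap.toContinuousLinearMap (Matrix.toEuclideanLin A)‖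

/-- The Euclidean norm of a vector in `ℝ^n`. -/
noncomputable def evNorm {n : ℕ} (x : Fin n → ℝ) : ℝ :=
  ‖(EuclideanSpace.equiv (Fin n) ℝ).symm x‖

/-- Uniform SOSC with constant `γ`. -/
def USOSC {nx nu : ℕ} (N : ℕ) (γ : ℝ)
    (A : ℕ → Matrix (Fin nx) (Fin nx) ℝ) (B : ℕ → Matrix (Fin nx) (Fin nu) ℝ)
    (Q : ℕ → Matrix (Fin nx) (Fin nx) ℝ) (R : ℕ → Matrix (Fin nu) (Fin nu) ℝ)
    (S : ℕ → Matrix (Fin nu) (Fin nx) ℝ) : Prop :=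
  ∀ (p : ℕ → Fin nx → ℝ) (q : ℕ → Fin nu → ℝ),
    p 0 = 0 → (∀ k < N, p (k + 1) = A k *ᵥ p k + B k *ᵥ q k) →
    γ * ((∑ k ∈ range (N + 1), evNorm (p k) ^ 2) + ∑ k ∈ range N, evNorm (q k) ^ 2)
      ≤ (∑ k ∈ range N,
          (p k ⬝ᵥ Q k *ᵥ p k + 2 * (q k ⬝ᵥ S k *ᵥ p k) + q k ⬝ᵥ R k *ᵥ q k))
        + p N ⬝ᵥ Q N *ᵥ p N

/-! ### Auxiliary lemmas -/

section Aux

set_option linter.unusedSectionVars false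

lemma tquad {a b c : Type*} [Fintype a] [Fintype b] [Fintype c]
    (M : Matrix a b ℝ) (W : Matrix a c ℝ) (u : b → ℝ) (v : c → ℝ) :
    u ⬝ᵥ (Mᵀ * W) *ᵥ v = (M *ᵥ u) ⬝ᵥ W *ᵥ v := by
  rw [← Matrix.mulVec_mulVec, Matrix.dotProduct_mulVec, Matrix.vecMul_transpose]

variable {nx nu : Type*} [Fintype nx] [Fintype nu] [DecidableEq nx] [DecidableEq nu]

lemma quad_symm {W : Matrix nx nx ℝ} (hW : W.IsSymm) (u v : nx → ℝ) :
    u ⬝ᵥ W *ᵥ v = v ⬝ᵥ W *ᵥ u := by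
  rw [Matrix.dotProduct_mulVec, ← Matrix.vecMul_transpose, hW.eq, dotProduct_comm]

lemma sandwich_isSymm {W : Matrix nx nx ℝ} (hW : W.IsSymm) (M : Matrix nx nu ℝ) :
    (Mᵀ * W * M).IsSymm := by
  rw [Matrix.IsSymm, Matrix.transpose_mul, Matrix.transpose_mul, Matrix.transpose_transpose,
    hW.eq, Matrix.mul_assoc]

lemma psd_of {M : Matrix nx nx ℝ} (hsym : M.IsSymm) (h : ∀ x, 0 ≤ x ⬝ᵥ M *ᵥ x) :
    M.PosSemidef := by
  refine (Matrix.posSemidef_iff_dotProduct_mulVec).2 ⟨?_, fun x => by simpa using h x⟩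
  rw [Matrix.IsHermitian, Matrix.conjTranspose_eq_transpose_of_trivial]
  exact hsym

lemma psd_quad {M : Matrix nx nx ℝ} (h : M.PosSemidef) (x : nx → ℝ) :
    0 ≤ x ⬝ᵥ M *ᵥ x := by simpa using h.dotProduct_mulVec_nonneg x

/-- Completion-of-squares identity for one stage of the convexification. -/
lemma comp_sq (Rtk : Matrix nu nu ℝ) (Stk : Matrix nu nx ℝ) (Qtk : Matrix nx nx ℝ) (δ : ℝ)
    (hRsym : Rtk.IsSymm) (hRdet : IsUnit Rtk.det)
    (hQt : Qtk = Stkᵀ * Rtk⁻¹ * Stk + δ • (1 : Matrix nx nx ℝ)) (p : nx → ℝ) (q : nu → ℝ) :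
    p ⬝ᵥ Qtk *ᵥ p + 2 * (q ⬝ᵥ Stk *ᵥ p) + q ⬝ᵥ Rtk *ᵥ q
    = (q + Rtk⁻¹ *ᵥ (Stk *ᵥ p)) ⬝ᵥ Rtk *ᵥ (q + Rtk⁻¹ *ᵥ (Stk *ᵥ p)) + δ * (p ⬝ᵥ p) := by
  subst hQt
  set w := Stk *ᵥ p with hw
  set u := Rtk⁻¹ *ᵥ w with hu
  have hRu : Rtk *ᵥ u = w := by
    rw [hu, Matrix.mulVec_mulVec, Matrix.mul_nonsing_inv _ hRdet, Matrix.one_mulVec]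
  have h1 : p ⬝ᵥ (Stkᵀ * Rtk⁻¹ * Stk) *ᵥ p = w ⬝ᵥ u := by
    rw [Matrix.mul_assoc, tquad, ← hw, ← Matrix.mulVec_mulVec, ← hu]
  have h2 : u ⬝ᵥ Rtk *ᵥ q = q ⬝ᵥ w := by
    rw [quad_symm hRsym, hRu]
  have h3 : q ⬝ᵥ Rtk *ᵥ u = q ⬝ᵥ w := by rw [hRu]
  have h4 : u ⬝ᵥ Rtk *ᵥ u = u ⬝ᵥ w := by rw [hRu]
  have h5 : p ⬝ᵥ (δ • (1 : Matrix nx nx ℝ)) *ᵥ p = δ * (p ⬝ᵥ p) := by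
    rw [Matrix.smul_mulVec, Matrix.one_mulVec, dotProduct_smul, smul_eq_mul]
  simp only [Matrix.add_mulVec, Matrix.mulVec_add, dotProduct_add, add_dotProduct]
  rw [h1, h2, h3, h4, h5, dotProduct_comm w u]
  ring

/-- One-stage telescoping identity for the convexified cost. -/
lemma stage_identity (Ak Qk Qb1 Qbk Qtk : Matrix nx nx ℝ) (Bk : Matrix nx nu ℝ)
    (Rk Rtk : Matrix nu nu ℝ) (Sk Stk : Matrix nu nx ℝ)
    (hsym : Qb1.IsSymm)
    (hRt : Rtk = Rk + Bkᵀ * Qb1 * Bk) (hSt : Stk = Sk + Bkᵀ * Qb1 * Ak)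
    (hQb : Qbk = Qk + Akᵀ * Qb1 * Ak - Qtk) (p : nx → ℝ) (q : nu → ℝ) :
    p ⬝ᵥ Qk *ᵥ p + 2 * (q ⬝ᵥ Sk *ᵥ p) + q ⬝ᵥ Rk *ᵥ q
    = (p ⬝ᵥ Qbk *ᵥ p - (Ak *ᵥ p + Bk *ᵥ q) ⬝ᵥ Qb1 *ᵥ (Ak *ᵥ p + Bk *ᵥ q))
      + (p ⬝ᵥ Qtk *ᵥ p + 2 * (q ⬝ᵥ Stk *ᵥ p) + q ⬝ᵥ Rtk *ᵥ q) := by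
  subst hRt hSt hQb
  have h1 : (Ak *ᵥ p) ⬝ᵥ Qb1 *ᵥ (Bk *ᵥ q) = (Bk *ᵥ q) ⬝ᵥ Qb1 *ᵥ (Ak *ᵥ p) :=
    quad_symm hsym _ _
  have h2 : p ⬝ᵥ (Akᵀ * Qb1 * Ak) *ᵥ p = (Ak *ᵥ p) ⬝ᵥ Qb1 *ᵥ (Ak *ᵥ p) := by
    rw [Matrix.mul_assoc, tquad, Matrix.mulVec_mulVec]
  have h3 : q ⬝ᵥ (Bkᵀ * Qb1 * Ak) *ᵥ p = (Bk *ᵥ q) ⬝ᵥ Qb1 *ᵥ (Ak *ᵥ p) := by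
    rw [Matrix.mul_assoc, tquad, Matrix.mulVec_mulVec]
  have h4 : q ⬝ᵥ (Bkᵀ * Qb1 * Bk) *ᵥ q = (Bk *ᵥ q) ⬝ᵥ Qb1 *ᵥ (Bk *ᵥ q) := by
    rw [Matrix.mul_assoc, tquad, Matrix.mulVec_mulVec]
  simp only [Matrix.add_mulVec, Matrix.sub_mulVec, Matrix.mulVec_add, dotProduct_add,
    add_dotProduct, dotProduct_sub, sub_dotProduct]
  rw [h2, h3, h4, h1]
  ring

lemma quad_fromBlocks (P : Matrix nx nx ℝ) (Bm : Matrix nu nx ℝ) (R : Matrix nu nu ℝ)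
    (z : nx ⊕ nu → ℝ) :
    z ⬝ᵥ (Matrix.fromBlocks P Bmᵀ Bm R) *ᵥ z
    = (z ∘ Sum.inl) ⬝ᵥ P *ᵥ (z ∘ Sum.inl) + 2 * ((z ∘ Sum.inr) ⬝ᵥ Bm *ᵥ (z ∘ Sum.inl))
      + (z ∘ Sum.inr) ⬝ᵥ R *ᵥ (z ∘ Sum.inr) := by
  set zp := z ∘ Sum.inl
  set zq := z ∘ Sum.inr
  have hz : z = Sum.elim zp zq := (Sum.elim_comp_inl_inr z).symm
  rw [hz, Matrix.fromBlocks_mulVec]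
  simp only [Sum.elim_comp_inl, Sum.elim_comp_inr]
  rw [sumElim_dotProduct_sumElim]
  have hcross : zp ⬝ᵥ Bmᵀ *ᵥ zq = zq ⬝ᵥ Bm *ᵥ zp := by
    rw [Matrix.dotProduct_mulVec, Matrix.vecMul_transpose, dotProduct_comm]
  simp only [dotProduct_add]
  rw [hcross]; ring

end Aux

lemma evNorm_nonneg {n : ℕ} (x : Fin n → ℝ) : 0 ≤ evNorm x := norm_nonneg _

lemma evNorm_sq {n : ℕ} (x : Fin n → ℝ) : evNorm x ^ 2 = x ⬝ᵥ x := by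
  rw [evNorm, EuclideanSpace.norm_eq, Real.sq_sqrt (by positivity)]
  simp [dotProduct, sq]

lemma evNorm_add_le {n : ℕ} (x y : Fin n → ℝ) : evNorm (x + y) ≤ evNorm x + evNorm y := by
  unfold evNorm
  rw [map_add]
  exact norm_add_le _ _

lemma evNorm_neg {n : ℕ} (x : Fin n → ℝ) : evNorm (-x) = evNorm x := by
  unfold evNorm
  rw [map_neg, norm_neg]

lemma evNorm_mulVec_le {m n : ℕ} (M : Matrix (Fin m) (Fin n) ℝ) (x : Fin n → ℝ) :
    evNorm (M *ᵥ x) ≤ opNorm M * evNorm x := by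
  have h : (EuclideanSpace.equiv (Fin m) ℝ).symm (M *ᵥ x)
      = (LinearMap.toContinuousLinearMap (Matrix.toEuclideanLin M))
        ((EuclideanSpace.equiv (Fin n) ℝ).symm x) := rfl
  rw [evNorm, evNorm, h]
  exact (LinearMap.toContinuousLinearMap (Matrix.toEuclideanLin M)).le_opNorm _

lemma dotProduct_le_evNorm {n : ℕ} (x y : Fin n → ℝ) : x ⬝ᵥ y ≤ evNorm x * evNorm y := by
  have h : x ⬝ᵥ y = inner ℝ ((EuclideanSpace.equiv (Fin n) ℝ).symm x)
      ((EuclideanSpace.equiv (Fin n) ℝ).symm y) := by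
    simp [PiLp.inner_apply, dotProduct, mul_comm]
  rw [h, evNorm, evNorm]
  exact real_inner_le_norm _ _

lemma dotProduct_self_pos' {n : ℕ} {x : Fin n → ℝ} (hx : x ≠ 0) : 0 < x ⬝ᵥ x := by
  have hnn : ∀ i, 0 ≤ x i * x i := fun i => mul_self_nonneg _
  rcases Function.ne_iff.1 hx with ⟨i, hi⟩
  calc (0:ℝ) < x i * x i := mul_self_pos.2 (by simpa using hi)
    _ ≤ x ⬝ᵥ x := Finset.single_le_sum (fun j _ => hnn j) (Finset.mem_univ i)

lemma dot_sum_split {n m : ℕ} (z : Fin n ⊕ Fin m → ℝ) :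
    z ⬝ᵥ z = (z ∘ Sum.inl) ⬝ᵥ (z ∘ Sum.inl) + (z ∘ Sum.inr) ⬝ᵥ (z ∘ Sum.inr) := by
  have hz : z = Sum.elim (z ∘ Sum.inl) (z ∘ Sum.inr) := (Sum.elim_comp_inl_inr z).symm
  conv_lhs => rw [hz]
  rw [sumElim_dotProduct_sumElim]

lemma quad_ge_of_psd_sub {n : ℕ} {M : Matrix (Fin n) (Fin n) ℝ} {γ : ℝ}
    (h : (M - γ • (1 : Matrix (Fin n) (Fin n) ℝ)).PosSemidef) (x : Fin n → ℝ) :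
    γ * (x ⬝ᵥ x) ≤ x ⬝ᵥ M *ᵥ x := by
  have h0 := psd_quad h x
  simp only [Matrix.sub_mulVec, dotProduct_sub, Matrix.smul_mulVec, Matrix.one_mulVec,
    dotProduct_smul, smul_eq_mul] at h0
  linarith

lemma det_isUnit_of_psd_sub {n : ℕ} {M : Matrix (Fin n) (Fin n) ℝ} {γ : ℝ} (hγ : 0 < γ)
    (hsym : M.IsSymm)
    (h : (M - γ • (1 : Matrix (Fin n) (Fin n) ℝ)).PosSemidef) : IsUnit M.det := by
  have hPD : M.PosDef := by
    refine (Matrix.posDef_iff_dotProduct_mulVec).2 ⟨?_, fun x hx => ?_⟩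
    · rw [Matrix.IsHermitian, Matrix.conjTranspose_eq_transpose_of_trivial]; exact hsym
    · have h1 : 0 < γ * (x ⬝ᵥ x) := mul_pos hγ (dotProduct_self_pos' hx)
      have h2 := quad_ge_of_psd_sub h x
      simpa using lt_of_lt_of_le h1 h2
  exact (Matrix.isUnit_iff_isUnit_det M).mp hPD.isUnit

lemma scalar_key (γ δ Υt a b c u' : ℝ) (hγ : 0 < γ) (hδ0 : 0 < δ) (hδγ : δ < γ) (hΥ : 0 < Υt)
    (ha : 0 ≤ a) (hb : 0 ≤ b) (hc : 0 ≤ c) (hu : 0 ≤ u')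
    (h1 : γ * u' ≤ Υt * a) (h2 : b ≤ c + u') :
    (γ / (γ + Υt)) ^ 2 * δ * (a ^ 2 + b ^ 2) ≤ γ * c ^ 2 + δ * a ^ 2 := by
  have hs : (0:ℝ) < γ + Υt := by linarith
  have key : γ ^ 2 * δ * (a ^ 2 + b ^ 2) ≤ (γ + Υt) ^ 2 * (γ * c ^ 2 + δ * a ^ 2) := by
    have h3 : γ * b ≤ γ * c + Υt * a := by nlinarith
    have h4 : (γ * b) ^ 2 ≤ (γ * c + Υt * a) ^ 2 := by
      have := pow_le_pow_left₀ (mul_nonneg hγ.le hb) h3 2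
      simpa using this
    have h5 : δ * (γ * b) ^ 2 ≤ δ * (γ * c + Υt * a) ^ 2 := by nlinarith
    have h6 : 0 ≤ δ * γ * Υt * (a - c) ^ 2 := by positivity
    have h7 : 0 ≤ δ * γ * Υt * a ^ 2 := by positivity
    have h8 : 0 ≤ γ * (γ + Υt) * ((γ + Υt) - δ) * c ^ 2 := by
      have h9 : 0 ≤ (γ + Υt) - δ := by linarith
      positivity
    nlinarith [h5, h6, h7, h8]
  calc (γ / (γ + Υt)) ^ 2 * δ * (a ^ 2 + b ^ 2)
      = γ ^ 2 * δ * (a ^ 2 + b ^ 2) / (γ + Υt) ^ 2 := by field_simp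
    _ ≤ γ * c ^ 2 + δ * a ^ 2 := by
        rw [div_le_iff₀ (by positivity)]
        nlinarith [key]

/-- The feedback control used in the proof of Theorem 5.7. -/
noncomputable def ctrlF {nx nu : ℕ} (k : ℕ) (Rt : ℕ → Matrix (Fin nu) (Fin nu) ℝ)
    (St : ℕ → Matrix (Fin nu) (Fin nx) ℝ) (q0 : Fin nu → ℝ) (j : ℕ) (v : Fin nx → ℝ) :
    Fin nu → ℝ :=
  if j < k then 0 else if j = k then q0 else -(((Rt j)⁻¹ * St j) *ᵥ v)

/-- The trajectory generated by `ctrlF`. -/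
noncomputable def trajF {nx nu : ℕ} (k : ℕ) (A : ℕ → Matrix (Fin nx) (Fin nx) ℝ)
    (B : ℕ → Matrix (Fin nx) (Fin nu) ℝ) (Rt : ℕ → Matrix (Fin nu) (Fin nu) ℝ)
    (St : ℕ → Matrix (Fin nu) (Fin nx) ℝ) (q0 : Fin nu → ℝ) : ℕ → (Fin nx → ℝ)
  | 0 => 0
  | j + 1 => A j *ᵥ trajF k A B Rt St q0 j
      + B j *ᵥ ctrlF k Rt St q0 j (trajF k A B Rt St q0 j)

/-- **Lower-bound-preserving property of the convexification (Theorem 5.7).**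
Under uniform SOSC with constant `γ > 0`, for `δ ∈ (0, γ)` and any `Υ̃ > 0` bounding
`‖S̃_k(δ)‖`, one has `H̃_k(δ) ⪰ λ_H I` for all `k ≤ N`, where
`λ_H = (γ/(γ+Υ̃))²·δ > 0`. -/
theorem convexification_lower_bound_preserving
    (N nx nu : ℕ) (hN : 1 ≤ N) (hnx : 1 ≤ nx) (hnu : 1 ≤ nu)
    (γ δ Υt : ℝ) (hγ : 0 < γ) (hδ0 : 0 < δ) (hδγ : δ < γ) (hΥt : 0 < Υt)
    (A : ℕ → Matrix (Fin nx) (Fin nx) ℝ) (B : ℕ → Matrix (Fin nx) (Fin nu) ℝ)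
    (Q : ℕ → Matrix (Fin nx) (Fin nx) ℝ) (R : ℕ → Matrix (Fin nu) (Fin nu) ℝ)
    (S : ℕ → Matrix (Fin nu) (Fin nx) ℝ)
    (hQsymm : ∀ k ≤ N, (Q k).IsSymm) (hRsymm : ∀ k < N, (R k).IsSymm)
    (husosc : USOSC N γ A B Q R S)
    (Qbar : ℕ → Matrix (Fin nx) (Fin nx) ℝ) (Rt : ℕ → Matrix (Fin nu) (Fin nu) ℝ)
    (St : ℕ → Matrix (Fin nu) (Fin nx) ℝ) (Qt : ℕ → Matrix (Fin nx) (Fin nx) ℝ)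
    (Ht : ℕ → Matrix (Fin nx ⊕ Fin nu) (Fin nx ⊕ Fin nu) ℝ)
    (hQbarN : Qbar N = Q N - δ • (1 : Matrix (Fin nx) (Fin nx) ℝ))
    (hRt : ∀ k < N, Rt k = R k + (B k)ᵀ * Qbar (k + 1) * B k)
    (hSt : ∀ k < N, St k = S k + (B k)ᵀ * Qbar (k + 1) * A k)
    (hQt : ∀ k < N, Qt k = (St k)ᵀ * (Rt k)⁻¹ * St k
      + δ • (1 : Matrix (Fin nx) (Fin nx) ℝ))
    (hQbar : ∀ k < N, Qbar k = Q k + (A k)ᵀ * Qbar (k + 1) * A k - Qt k)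
    (hHt : ∀ k < N, Ht k = Matrix.fromBlocks (Qt k) (St k)ᵀ (St k) (Rt k))
    (hHtN : Ht N = δ • (1 : Matrix (Fin nx ⊕ Fin nu) (Fin nx ⊕ Fin nu) ℝ))
    (hStbnd : ∀ k < N, opNorm (St k) ≤ Υt)
    (lamH : ℝ) (hlamH : lamH = (γ / (γ + Υt)) ^ 2 * δ) :
    0 < lamH ∧
    ∀ k ≤ N, (Ht k
      - lamH • (1 : Matrix (Fin nx ⊕ Fin nu) (Fin nx ⊕ Fin nu) ℝ)).PosSemidef := by
  have hs : (0:ℝ) < γ + Υt := by linarith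
  have hlam_pos : 0 < lamH := by rw [hlamH]; positivity
  refine ⟨hlam_pos, ?_⟩
  -- `Good k` : all the structural facts we need about indices `≥ k`.
  set Good : ℕ → Prop := fun k =>
    (∀ j, k ≤ j → j ≤ N → (Qbar j).IsSymm) ∧
    (∀ j, k ≤ j → j < N → (Rt j).IsSymm ∧
      ((Rt j) - γ • (1 : Matrix (Fin nu) (Fin nu) ℝ)).PosSemidef) with hGood
  have hone_symm_x : (δ • (1 : Matrix (Fin nx) (Fin nx) ℝ)).IsSymm :=
    (Matrix.isSymm_one).smul δ
  have hQbarN_symm : (Qbar N).IsSymm := by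
    rw [hQbarN]; exact (hQsymm N le_rfl).sub hone_symm_x
  have hGoodN : Good N := by
    constructor
    · intro j hj hj'
      have : j = N := le_antisymm hj' hj
      rw [this]; exact hQbarN_symm
    · intro j hj hj'; omega
  have hstep : ∀ k, k < N → Good (k + 1) → Good k := by
    intro k hkN hg
    obtain ⟨hQsym', hRt'⟩ := hg
    have hQb1 : (Qbar (k + 1)).IsSymm := hQsym' (k + 1) le_rfl hkN
    have hRtksym : (Rt k).IsSymm := by
      rw [hRt k hkN]; exact (hRsymm k hkN).add (sandwich_isSymm hQb1 (B k))
    -- IsUnit facts for later indices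
    have hRtunit : ∀ j, k < j → j < N → IsUnit (Rt j).det := fun j hj hj' =>
      det_isUnit_of_psd_sub hγ (hRt' j hj hj').1 (hRt' j hj hj').2
    -- the key positivity of `Rt k`
    have hRtk_psd : ((Rt k) - γ • (1 : Matrix (Fin nu) (Fin nu) ℝ)).PosSemidef := by
      apply psd_of (hRtksym.sub ((Matrix.isSymm_one).smul γ))
      intro q0
      have main : γ * (q0 ⬝ᵥ q0) ≤ q0 ⬝ᵥ Rt k *ᵥ q0 := by
        -- the trajectory
        set p : ℕ → Fin nx → ℝ := trajF k A B Rt St q0 with hp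
        set qs : ℕ → Fin nu → ℝ := fun j => ctrlF k Rt St q0 j (p j) with hqs
        have hp0 : p 0 = 0 := rfl
        have hdyn : ∀ j, p (j + 1) = A j *ᵥ p j + B j *ᵥ qs j := fun j => rfl
        have hqslt : ∀ j, j < k → qs j = 0 := by
          intro j hj; rw [hqs]; simp only [ctrlF, if_pos hj]
        have hplek : ∀ j, j ≤ k → p j = 0 := by
          intro j
          induction j with
          | zero => intro _; exact hp0
          | succ i ih =>
            intro hik
            rw [hdyn i, ih (by omega), hqslt i (by omega)]
            simp [Matrix.mulVec_zero]
        have hqsk : qs k = q0 := by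
          rw [hqs]; simp [ctrlF]
        have hqsgt : ∀ j, k < j → qs j = -(((Rt j)⁻¹ * St j) *ᵥ p j) := by
          intro j hj
          rw [hqs]
          simp only [ctrlF, if_neg (by omega : ¬ j < k), if_neg (by omega : ¬ j = k)]
        have hsosc := husosc p qs hp0 (fun j _ => hdyn j)
        -- telescoping
        have hsum1 : ∑ j ∈ range N,
              (p j ⬝ᵥ Q j *ᵥ p j + 2 * (qs j ⬝ᵥ S j *ᵥ p j) + qs j ⬝ᵥ R j *ᵥ qs j)
            = ((p 0 ⬝ᵥ Qbar 0 *ᵥ p 0) - (p N ⬝ᵥ Qbar N *ᵥ p N))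
              + ∑ j ∈ range N,
                (p j ⬝ᵥ Qt j *ᵥ p j + 2 * (qs j ⬝ᵥ St j *ᵥ p j) + qs j ⬝ᵥ Rt j *ᵥ qs j) := by
          rw [← Finset.sum_range_sub' (fun j => p j ⬝ᵥ Qbar j *ᵥ p j) N,
            ← Finset.sum_add_distrib]
          refine Finset.sum_congr rfl fun j hj => ?_
          have hjN : j < N := Finset.mem_range.1 hj
          by_cases hjk : j < k
          · rw [hplek j hjk.le, hplek (j + 1) (by omega), hqslt j hjk]
            simp [Matrix.mulVec_zero, dotProduct_zero, zero_dotProduct]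
          · have hQb1j : (Qbar (j + 1)).IsSymm := hQsym' (j + 1) (by omega) hjN
            rw [hdyn j]
            exact stage_identity (A j) (Q j) (Qbar (j + 1)) (Qbar j) (Qt j) (B j)
              (R j) (Rt j) (S j) (St j) hQb1j (hRt j hjN) (hSt j hjN) (hQbar j hjN)
              (p j) (qs j)
        -- evaluation of the convexified stage costs
        have hΦval : ∀ j < N,
            (p j ⬝ᵥ Qt j *ᵥ p j + 2 * (qs j ⬝ᵥ St j *ᵥ p j) + qs j ⬝ᵥ Rt j *ᵥ qs j)
            = (if j = k then q0 ⬝ᵥ Rt k *ᵥ q0 else 0)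
              + (if k < j then δ * (p j ⬝ᵥ p j) else 0) := by
          intro j hjN
          rcases lt_trichotomy j k with hjk | hjk | hjk
          · rw [hplek j hjk.le, hqslt j hjk]
            simp [if_neg (by omega : ¬ j = k), if_neg (by omega : ¬ k < j),
              Matrix.mulVec_zero, dotProduct_zero, zero_dotProduct]
          · subst hjk
            rw [hplek j le_rfl, hqsk]
            simp [Matrix.mulVec_zero, dotProduct_zero, zero_dotProduct]
          · have hcs := comp_sq (Rt j) (St j) (Qt j) δ (hRt' j hjk hjN).1
              (hRtunit j hjk hjN) (hQt j hjN) (p j) (qs j)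
            have hzero : qs j + (Rt j)⁻¹ *ᵥ (St j *ᵥ p j) = 0 := by
              rw [hqsgt j hjk, ← Matrix.mulVec_mulVec]
              exact neg_add_cancel _
            rw [hcs, hzero]
            simp [if_neg (by omega : ¬ j = k), if_pos hjk, Matrix.mulVec_zero,
              dotProduct_zero, zero_dotProduct]
        have hsplit : ∑ j ∈ range N,
              (p j ⬝ᵥ Qt j *ᵥ p j + 2 * (qs j ⬝ᵥ St j *ᵥ p j) + qs j ⬝ᵥ Rt j *ᵥ qs j)
            = q0 ⬝ᵥ Rt k *ᵥ q0
              + ∑ j ∈ range N, (if k < j then δ * (p j ⬝ᵥ p j) else 0) := by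
          rw [Finset.sum_congr rfl (fun j hj => hΦval j (Finset.mem_range.1 hj)),
            Finset.sum_add_distrib, Finset.sum_ite_eq' (range N) k
              (fun _ => q0 ⬝ᵥ Rt k *ᵥ q0), if_pos (Finset.mem_range.2 hkN)]
        have hQbarNval : p N ⬝ᵥ Qbar N *ᵥ p N
            = p N ⬝ᵥ Q N *ᵥ p N - δ * (p N ⬝ᵥ p N) := by
          rw [hQbarN]
          simp [Matrix.sub_mulVec, dotProduct_sub, Matrix.smul_mulVec,
            Matrix.one_mulVec, dotProduct_smul, smul_eq_mul]
        have hp00 : p 0 ⬝ᵥ Qbar 0 *ᵥ p 0 = 0 := by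
          rw [hp0]; simp
        -- bounds on the norm sums
        have hT2 : evNorm q0 ^ 2 ≤ ∑ j ∈ range N, evNorm (qs j) ^ 2 := by
          calc evNorm q0 ^ 2 = evNorm (qs k) ^ 2 := by rw [hqsk]
            _ ≤ ∑ j ∈ range N, evNorm (qs j) ^ 2 :=
              Finset.single_le_sum (f := fun j => evNorm (qs j) ^ 2)
                (fun j _ => sq_nonneg _) (Finset.mem_range.2 hkN)
        have hP : (∑ j ∈ range N, (if k < j then δ * (p j ⬝ᵥ p j) else 0))
              + δ * (p N ⬝ᵥ p N)
            ≤ γ * ∑ j ∈ range (N + 1), evNorm (p j) ^ 2 := by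
          rw [Finset.mul_sum, Finset.sum_range_succ]
          have hptwise : ∀ j ∈ range N, (if k < j then δ * (p j ⬝ᵥ p j) else 0)
              ≤ γ * evNorm (p j) ^ 2 := by
            intro j _
            by_cases hkj : k < j
            · rw [if_pos hkj, evNorm_sq]
              have h0 : 0 ≤ p j ⬝ᵥ p j := by rw [← evNorm_sq]; exact sq_nonneg _
              nlinarith
            · rw [if_neg hkj]; positivity
          have hlast : δ * (p N ⬝ᵥ p N) ≤ γ * evNorm (p N) ^ 2 := by
            rw [evNorm_sq]
            have h0 : 0 ≤ p N ⬝ᵥ p N := by rw [← evNorm_sq]; exact sq_nonneg _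
            nlinarith
          exact add_le_add (Finset.sum_le_sum hptwise) hlast
        -- put everything together
        rw [hsum1, hsplit, hp00, hQbarNval] at hsosc
        have hq0 : γ * (q0 ⬝ᵥ q0) ≤ γ * ∑ j ∈ range N, evNorm (qs j) ^ 2 := by
          rw [← evNorm_sq]
          exact mul_le_mul_of_nonneg_left hT2 hγ.le
        linarith
      have : q0 ⬝ᵥ ((Rt k - γ • (1 : Matrix (Fin nu) (Fin nu) ℝ)) *ᵥ q0)
          = q0 ⬝ᵥ Rt k *ᵥ q0 - γ * (q0 ⬝ᵥ q0) := by
        simp [Matrix.sub_mulVec, dotProduct_sub, Matrix.smul_mulVec,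
          Matrix.one_mulVec, dotProduct_smul, smul_eq_mul]
      rw [this]
      linarith
    -- symmetry of `Qbar k`
    have hRinvsym : ((Rt k)⁻¹).IsSymm := by
      rw [Matrix.IsSymm, Matrix.transpose_nonsing_inv, hRtksym.eq]
    have hQtksym : (Qt k).IsSymm := by
      rw [hQt k hkN]
      exact (sandwich_isSymm hRinvsym (St k)).add hone_symm_x
    have hQbarksym : (Qbar k).IsSymm := by
      rw [hQbar k hkN]
      exact ((hQsymm k hkN.le).add (sandwich_isSymm hQb1 (A k))).sub hQtksym
    constructor
    · intro j hj hj'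
      rcases eq_or_lt_of_le hj with h | h
      · rw [← h]; exact hQbarksym
      · exact hQsym' j h hj'
    · intro j hj hj'
      rcases eq_or_lt_of_le hj with h | h
      · rw [← h]; exact ⟨hRtksym, hRtk_psd⟩
      · exact hRt' j h hj'
  -- downward induction
  have hGoodAll : ∀ m, Good (N - m) := by
    intro m
    induction m with
    | zero => simpa using hGoodN
    | succ i ih =>
      by_cases h : N ≤ i
      · have h1 : N - (i + 1) = N - i := by omega
        rwa [h1]
      · have h1 : N - (i + 1) < N := by omega
        have h2 : N - (i + 1) + 1 = N - i := by omega
        exact hstep _ h1 (h2 ▸ ih)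
  have hGood0 : Good 0 := by simpa using hGoodAll N
  obtain ⟨hQsymAll, hRtAll⟩ := hGood0
  -- final conclusion
  intro k hk
  rcases eq_or_lt_of_le hk with hkN | hkN
  · -- terminal case `k = N`
    subst hkN
    rw [hHtN, ← sub_smul]
    apply psd_of ((Matrix.isSymm_one).smul (δ - lamH))
    intro x
    have hlamδ : lamH ≤ δ := by
      have h1 : γ / (γ + Υt) ≤ 1 := by
        rw [div_le_one hs]; linarith
      have h2 : (0:ℝ) ≤ γ / (γ + Υt) := by positivity
      have h3 : (γ / (γ + Υt)) ^ 2 ≤ 1 := by nlinarith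
      rw [hlamH]; nlinarith
    have hxx : 0 ≤ x ⬝ᵥ x :=
      Finset.sum_nonneg fun i _ => mul_self_nonneg _
    have : x ⬝ᵥ ((δ - lamH) • (1 : Matrix (Fin nx ⊕ Fin nu) (Fin nx ⊕ Fin nu) ℝ)) *ᵥ x
        = (δ - lamH) * (x ⬝ᵥ x) := by
      simp [Matrix.smul_mulVec, Matrix.one_mulVec, dotProduct_smul, smul_eq_mul]
    rw [this]
    nlinarith
  · -- case `k < N`
    obtain ⟨hRtksym, hRtk_psd⟩ := hRtAll k (Nat.zero_le k) hkN
    have hRtunit : IsUnit (Rt k).det := det_isUnit_of_psd_sub hγ hRtksym hRtk_psd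
    have hRinvsym : ((Rt k)⁻¹).IsSymm := by
      rw [Matrix.IsSymm, Matrix.transpose_nonsing_inv, hRtksym.eq]
    have hQtksym : (Qt k).IsSymm := by
      rw [hQt k hkN]
      exact (sandwich_isSymm hRinvsym (St k)).add ((Matrix.isSymm_one).smul δ)
    have hHtsym : (Ht k).IsSymm := by
      rw [hHt k hkN, Matrix.IsSymm, Matrix.fromBlocks_transpose, Matrix.transpose_transpose,
        hQtksym.eq, hRtksym.eq]
    apply psd_of (hHtsym.sub ((Matrix.isSymm_one).smul lamH))
    intro z
    have hzsplit : z ⬝ᵥ ((Ht k - lamH • (1 : Matrix (Fin nx ⊕ Fin nu) (Fin nx ⊕ Fin nu) ℝ)) *ᵥ z)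
        = z ⬝ᵥ Ht k *ᵥ z - lamH * (z ⬝ᵥ z) := by
      simp [Matrix.sub_mulVec, dotProduct_sub, Matrix.smul_mulVec,
        Matrix.one_mulVec, dotProduct_smul, smul_eq_mul]
    rw [hzsplit, sub_nonneg]
    set zp := z ∘ Sum.inl with hzp
    set zq := z ∘ Sum.inr with hzq
    set u : Fin nu → ℝ := (Rt k)⁻¹ *ᵥ (St k *ᵥ zp) with hu
    set w : Fin nu → ℝ := zq + u with hw
    have hquad : z ⬝ᵥ Ht k *ᵥ z = w ⬝ᵥ Rt k *ᵥ w + δ * (zp ⬝ᵥ zp) := by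
      rw [hHt k hkN, quad_fromBlocks]
      exact comp_sq (Rt k) (St k) (Qt k) δ hRtksym hRtunit (hQt k hkN) zp zq
    have hc : γ * evNorm w ^ 2 ≤ w ⬝ᵥ Rt k *ᵥ w := by
      rw [evNorm_sq]; exact quad_ge_of_psd_sub hRtk_psd w
    -- bound on `u`
    have hubnd : γ * evNorm u ≤ Υt * evNorm zp := by
      have e1 : γ * evNorm u ^ 2 ≤ u ⬝ᵥ Rt k *ᵥ u := by
        rw [evNorm_sq]; exact quad_ge_of_psd_sub hRtk_psd u
      have e2 : Rt k *ᵥ u = St k *ᵥ zp := by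
        rw [hu, Matrix.mulVec_mulVec, Matrix.mul_nonsing_inv _ hRtunit, Matrix.one_mulVec]
      have e3 : u ⬝ᵥ (St k *ᵥ zp) ≤ evNorm u * evNorm (St k *ᵥ zp) :=
        dotProduct_le_evNorm _ _
      have e4 : evNorm (St k *ᵥ zp) ≤ Υt * evNorm zp :=
        (evNorm_mulVec_le _ _).trans
          (mul_le_mul_of_nonneg_right (hStbnd k hkN) (evNorm_nonneg _))
      have e5 : γ * evNorm u ^ 2 ≤ evNorm u * (Υt * evNorm zp) := by
        calc γ * evNorm u ^ 2 ≤ u ⬝ᵥ Rt k *ᵥ u := e1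
          _ = u ⬝ᵥ (St k *ᵥ zp) := by rw [e2]
          _ ≤ evNorm u * evNorm (St k *ᵥ zp) := e3
          _ ≤ evNorm u * (Υt * evNorm zp) :=
              mul_le_mul_of_nonneg_left e4 (evNorm_nonneg _)
      rcases eq_or_lt_of_le (evNorm_nonneg u) with h0 | h0
      · rw [← h0, mul_zero]
        exact mul_nonneg hΥt.le (evNorm_nonneg _)
      · nlinarith [e5, h0]
    have hb : evNorm zq ≤ evNorm w + evNorm u := by
      have hzqw : zq = w + (-u) := by rw [hw]; abel
      calc evNorm zq = evNorm (w + (-u)) := by rw [← hzqw]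
        _ ≤ evNorm w + evNorm (-u) := evNorm_add_le _ _
        _ = evNorm w + evNorm u := by rw [evNorm_neg]
    have hzz : z ⬝ᵥ z = evNorm zp ^ 2 + evNorm zq ^ 2 := by
      rw [dot_sum_split, evNorm_sq, evNorm_sq]
    have hkey := scalar_key γ δ Υt (evNorm zp) (evNorm zq) (evNorm w) (evNorm u)
      hγ hδ0 hδγ hΥt (evNorm_nonneg _) (evNorm_nonneg _) (evNorm_nonneg _)
      (evNorm_nonneg _) hubnd hb
    rw [hquad, hzz, hlamH]
    have hδa : δ * evNorm zp ^ 2 = δ * (zp ⬝ᵥ zp) := by rw [evNorm_sq]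
    calc (γ / (γ + Υt)) ^ 2 * δ * (evNorm zp ^ 2 + evNorm zq ^ 2)
        ≤ γ * evNorm w ^ 2 + δ * evNorm zp ^ 2 := hkey
      _ ≤ w ⬝ᵥ Rt k *ᵥ w + δ * (zp ⬝ᵥ zp) := by
          rw [← hδa] at *
          linarith [hc]
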